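/- Let (X, B, μ) be a probability space with a measure-preserving action of a countable sofic group G, and let Σ be a sofic approximation sequence for G. For finite measurable partitions α ≥ ξ of X, the sofic entropy quantities satisfy h_{Σ,μ}^ξ(α) ≤ H_μ(ξ), where H_μ(ξ) is the Shannon entropy of ξ. -/

import Mathlib

open MeasureTheory Filter Finset Pointwise

section Defs

variable {G : Type*} [Group G] [DecidableEq G]
variable {X : Type*} [MeasurableSpace X] [MulAction G X]

/-- A finite measurable partition of `X`, indexed by `Fin n`. -/
def IsFinPartition {n : ℕ} (P : Fin n → Set X) : Prop :=
  (∀ i, MeasurableSet (P i)) ∧ Pairwise (Function.onFun Disjoint P) ∧ (⋃ i, P i) = Set.univ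

/-- `A` refines `P` via the index map `r` (each atom of `A` is contained in an atom of `P`). -/
def PartRefines {X : Type*} {m n : ℕ} (A : Fin m → Set X) (P : Fin n → Set X)
    (r : Fin m → Fin n) : Prop :=
  ∀ i, A i ⊆ P (r i)

/-- The uniform probability measure `ζ` of a subset of `{1,…,d}`. -/
noncomputable def unif {d : ℕ} (S : Set (Fin d)) : ℝ := S.ncard / d

/-- The cell `⋂_{s∈F} s A_{f(s)}` of the join partition `α_F`. -/
def cellF {m : ℕ} (A : Fin m → Set X) (F : Finset G) (f : {s // s ∈ F} → Fin m) : Set X :=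
  ⋂ s : {s // s ∈ F}, (s : G) • A (f s)

/-- Given the values `φ f` of a homomorphism on the cells of `α_F` (indexed by functions
`G → Fin m`, depending only on the restriction to `F`), the image `φ(s A_i)`. -/
def sBlock {m d : ℕ} (φ : (G → Fin m) → Set (Fin d)) (s : G) (i : Fin m) : Set (Fin d) :=
  ⋃ f ∈ {f : G → Fin m | f s = i}, φ f

/-- The image under `φ` of the cell of `α_F` determined by `f : F → Fin m`. -/
def cellBlock {m d : ℕ} (φ : (G → Fin m) → Set (Fin d)) (F : Finset G)
    (f : {s // s ∈ F} → Fin m) : Set (Fin d) :=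
  ⋃ g ∈ {g : G → Fin m | ∀ s : {s // s ∈ F}, g (s : G) = f s}, φ g

/-- `φ ∈ Hom_μ(α, F, δ, σ)`: `φ` is (the atom data of) a Boolean algebra homomorphism
`Σ(α_F) → P({1,…,d})` which is approximately equivariant and approximately
measure-preserving to within `δ`. -/
def IsHom (μ : Measure X) {m : ℕ} (A : Fin m → Set X) (F : Finset G) (δ : ℝ)
    {d : ℕ} (σ : G → Equiv.Perm (Fin d)) (φ : (G → Fin m) → Set (Fin d)) : Prop :=
  (∀ f g : G → Fin m, (∀ s ∈ F, f s = g s) → φ f = φ g) ∧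
  (∀ f g : G → Fin m, (∃ s ∈ F, f s ≠ g s) → Disjoint (φ f) (φ g)) ∧
  (⋃ f, φ f) = Set.univ ∧
  (∀ s ∈ F, ∑ i : Fin m,
      unif (symmDiff ((σ s) '' sBlock φ 1 i) (sBlock φ s i)) < δ) ∧
  (∑ f : {s // s ∈ F} → Fin m,
      |unif (cellBlock φ F f) - (μ (cellF A F f)).toReal| < δ)

/-- The restriction of `φ` to the coarser partition `ξ`, along the refinement map `r`. -/
def restrictHom {m n d : ℕ} (r : Fin m → Fin n) (φ : (G → Fin m) → Set (Fin d)) :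
    Fin n → Set (Fin d) :=
  fun j => ⋃ f ∈ {f : G → Fin m | r (f 1) = j}, φ f

/-- `|Hom_μ(α,F,δ,σ)|_ξ`: the number of restrictions to `ξ` of elements of
`Hom_μ(α,F,δ,σ)`. -/
noncomputable def homCount (μ : Measure X) {m n : ℕ} (A : Fin m → Set X) (r : Fin m → Fin n)
    (F : Finset G) (δ : ℝ) {d : ℕ} (σ : G → Equiv.Perm (Fin d)) : ℕ :=
  (restrictHom r '' {φ | IsHom μ A F δ σ φ}).ncard

/-- `h_{Σ,μ}^ξ(α,F,δ)`. -/
noncomputable def hFδ (μ : Measure X) {m n : ℕ} (A : Fin m → Set X) (r : Fin m → Fin n)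
    (F : Finset G) (δ : ℝ) (d : ℕ → ℕ) (σ : ∀ i, G → Equiv.Perm (Fin (d i))) : ℝ :=
  limsup (fun i => Real.log (homCount μ A r F δ (σ i)) / d i) atTop

/-- `h_{Σ,μ}^ξ(α) = inf_F inf_δ h_{Σ,μ}^ξ(α,F,δ)`, the infimum over nonempty finite
`F ⊆ G` (containing the identity, so that `α ⊆ Σ(α_F)`) and `δ > 0`. -/
noncomputable def hPartLoc (μ : Measure X) {m n : ℕ} (A : Fin m → Set X) (r : Fin m → Fin n)
    (d : ℕ → ℕ) (σ : ∀ i, G → Equiv.Perm (Fin (d i))) : ℝ :=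
  sInf { x | ∃ (F : Finset G) (δ : ℝ), (1 : G) ∈ F ∧ 0 < δ ∧ x = hFδ μ A r F δ d σ }

/-- `h_{Σ,μ}^ξ(S)`: the infimum over finite partitions `α ⊆ S` refining `ξ`. -/
noncomputable def hXi (μ : Measure X) (S : Set (Set X)) {n : ℕ} (P : Fin n → Set X)
    (d : ℕ → ℕ) (σ : ∀ i, G → Equiv.Perm (Fin (d i))) : ℝ :=
  sInf { x | ∃ (m : ℕ) (A : Fin m → Set X) (r : Fin m → Fin n),
    IsFinPartition A ∧ (∀ i, A i ∈ S) ∧ PartRefines A P r ∧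
    x = hPartLoc μ A r d σ }

/-- `h_{Σ,μ}(S)`: the supremum over finite partitions `ξ ⊆ S` of `h_{Σ,μ}^ξ(S)`. -/
noncomputable def hAlg (μ : Measure X) (S : Set (Set X))
    (d : ℕ → ℕ) (σ : ∀ i, G → Equiv.Perm (Fin (d i))) : ℝ :=
  sSup { x | ∃ (n : ℕ) (P : Fin n → Set X),
    IsFinPartition P ∧ (∀ j, P j ∈ S) ∧ x = hXi μ S P d σ }

/-- `Σ = (σ i : G → Sym(d i))` is a sofic approximation sequence: asymptotically
multiplicative and free. -/
def IsSoficApprox {G : Type*} [Group G] (d : ℕ → ℕ)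
    (σ : ∀ i, G → Equiv.Perm (Fin (d i))) : Prop :=
  (∀ s t : G, Tendsto (fun i =>
      (({k : Fin (d i) | σ i (s * t) k = σ i s (σ i t k)}.ncard : ℝ)) / d i)
      atTop (nhds 1)) ∧
  (∀ s t : G, s ≠ t → Tendsto (fun i =>
      (({k : Fin (d i) | σ i s k ≠ σ i t k}.ncard : ℝ)) / d i)
      atTop (nhds 1))

/-- The Shannon entropy `H_μ(P)` of a finite partition. -/
noncomputable def shannonEnt (μ : Measure X) {n : ℕ} (P : Fin n → Set X) : ℝ :=
  -∑ i, (μ (P i)).toReal * Real.log (μ (P i)).toReal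

end Defs

section Helpers

-- helper: limsup bounds
lemma limsup_div_nonneg (u : ℕ → ℕ) (d : ℕ → ℕ) :
    0 ≤ limsup (fun i => Real.log (u i) / d i) atTop := by
  rw [limsup_eq]
  apply Real.sInf_nonneg
  rintro a ha
  obtain ⟨i, hi⟩ := ha.exists
  exact le_trans (div_nonneg (Real.log_natCast_nonneg _) (Nat.cast_nonneg _)) hi

lemma limsup_le_of_le_forall {u : ℕ → ℝ} {B : ℝ} (h0 : ∀ i, 0 ≤ u i) (h : ∀ i, u i ≤ B) :
    limsup u atTop ≤ B := by
  rw [limsup_eq]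
  apply csInf_le
  · exact ⟨0, fun a ha => by obtain ⟨i, hi⟩ := ha.exists; exact le_trans (h0 i) hi⟩
  · exact Filter.Eventually.of_forall h

-- counting lemma
lemma count_le_exp {d n : ℕ} (q : Fin n → ℝ) (hq : ∀ j, 0 < q j) (hq1 : ∑ j, q j = 1)
    (c : ℝ) (S : Finset (Fin d → Fin n))
    (hS : ∀ f ∈ S, -∑ k, Real.log (q (f k)) ≤ c) :
    (S.card : ℝ) ≤ Real.exp c := by
  have key : (S.card : ℝ) * Real.exp (-c) ≤ 1 := by
    have h1 : ∑ f : Fin d → Fin n, ∏ k, q (f k) = 1 := by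
      rw [← Fintype.prod_sum]
      simp [hq1]
    have h2 : ∑ f ∈ S, ∏ k, q (f k) ≤ 1 := by
      rw [← h1]
      apply Finset.sum_le_sum_of_subset_of_nonneg (Finset.subset_univ S)
      intro f _ _
      exact Finset.prod_nonneg fun k _ => (hq (f k)).le
    refine le_trans ?_ h2
    rw [Finset.card_eq_sum_ones, Nat.cast_sum, Finset.sum_mul]
    apply Finset.sum_le_sum
    intro f hf
    have : ∏ k, q (f k) = Real.exp (∑ k, Real.log (q (f k))) := by
      rw [Real.exp_sum]
      exact (Finset.prod_congr rfl fun k _ => (Real.exp_log (hq (f k))).symm)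
    rw [this, Nat.cast_one, one_mul, Real.exp_le_exp]
    linarith [hS f hf]
  have := Real.exp_pos (-c)
  calc (S.card : ℝ) = (S.card : ℝ) * Real.exp (-c) * Real.exp c := by
        rw [mul_assoc, ← Real.exp_add]; simp
    _ ≤ 1 * Real.exp c := by
        apply mul_le_mul_of_nonneg_right key (Real.exp_pos c).le
    _ = Real.exp c := one_mul _

-- ncard of disjoint biUnion in a Fintype
lemma ncard_biUnion {α β : Type*} [Fintype β] (s : Finset α) (f : α → Set β)
    (h : ∀ x ∈ s, ∀ y ∈ s, x ≠ y → Disjoint (f x) (f y)) :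
    (⋃ i ∈ s, f i).ncard = ∑ i ∈ s, (f i).ncard := by
  classical
  induction s using Finset.induction_on with
  | empty => simp
  | @insert a s ha ih =>
    rw [Finset.set_biUnion_insert, Finset.sum_insert ha,
      Set.ncard_union_eq ?_ (Set.toFinite _) (Set.toFinite _),
      ih (fun x hx y hy => h x (Finset.mem_insert_of_mem hx) y (Finset.mem_insert_of_mem hy))]
    apply Set.disjoint_iUnion₂_right.mpr
    intro i hi
    exact h a (Finset.mem_insert_self a s) i (Finset.mem_insert_of_mem hi)
      (fun e => ha (e ▸ hi))

lemma count_le_exp_set {d n : ℕ} (q : Fin n → ℝ) (hq : ∀ j, 0 < q j) (hq1 : ∑ j, q j = 1)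
    (c : ℝ) (S : Set (Fin d → Fin n))
    (hS : ∀ f ∈ S, -∑ k, Real.log (q (f k)) ≤ c) :
    (S.ncard : ℝ) ≤ Real.exp c := by
  classical
  have hfin := Set.toFinite S
  rw [Set.ncard_eq_toFinset_card S hfin]
  exact count_le_exp q hq hq1 c hfin.toFinset (fun f hf => hS f (hfin.mem_toFinset.mp hf))

end Helpers

section Main

variable {G : Type*} [Group G] [DecidableEq G]
variable {X : Type*} [MeasurableSpace X] [MulAction G X]

lemma sum_toReal_measure_partition (μ : Measure X) [IsProbabilityMeasure μ]
    {n : ℕ} (P : Fin n → Set X) (hP : IsFinPartition P) :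
    ∑ j, (μ (P j)).toReal = 1 := by
  have h1 : μ (⋃ j, P j) = ∑' j, μ (P j) := measure_iUnion hP.2.1 hP.1
  rw [hP.2.2, measure_univ, tsum_fintype] at h1
  rw [← ENNReal.toReal_sum (fun j _ => measure_ne_top μ _), ← h1, ENNReal.toReal_one]

lemma shannonEnt_nonneg (μ : Measure X) [IsProbabilityMeasure μ]
    {n : ℕ} (P : Fin n → Set X) : 0 ≤ shannonEnt μ P := by
  rw [shannonEnt, neg_nonneg]
  apply Finset.sum_nonpos
  intro j _
  have h0 : 0 ≤ (μ (P j)).toReal := ENNReal.toReal_nonneg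
  have h1 : (μ (P j)).toReal ≤ 1 := by
    have := ENNReal.toReal_mono (by simp) (prob_le_one (μ := μ) (s := P j))
    simpa using this
  exact mul_nonpos_of_nonneg_of_nonpos h0 (Real.log_nonpos h0 h1)

lemma homCount_le_card (μ : Measure X) [IsProbabilityMeasure μ]
    {m n : ℕ} (hn : 0 < n) (A : Fin m → Set X) (P : Fin n → Set X) (r : Fin m → Fin n)
    (hA : IsFinPartition A) (hP : IsFinPartition P) (hr : PartRefines A P r)
    (δ : ℝ) {d : ℕ} (σ' : G → Equiv.Perm (Fin d)) :
    (homCount μ A r {1} δ σ' : ℝ) ≤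
      ({c : Fin d → Fin n | ∑ j,
        |((Finset.univ.filter (fun k => c k = j)).card : ℝ)/d - (μ (P j)).toReal| ≤ δ}.ncard : ℝ) := by
  classical
  have hone : (1:G) ∈ ({1} : Finset G) := Finset.mem_singleton_self 1
  haveI uq : Unique {s // s ∈ ({1} : Finset G)} :=
    ⟨⟨⟨1, hone⟩⟩, fun s => Subtype.ext (Finset.mem_singleton.mp s.2)⟩
  set one : {s // s ∈ ({1} : Finset G)} := ⟨1, hone⟩
  set Ψ : (Fin n → Set (Fin d)) → (Fin d → Fin n) :=
    fun ψ k => if h : ∃ j, k ∈ ψ j then h.choose else ⟨0, hn⟩ with hΨ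
  -- facts about a hom φ
  have hfib : ∀ φ : (G → Fin m) → Set (Fin d), IsHom μ A ({1} : Finset G) δ σ' φ →
      ∀ k j, (Ψ (restrictHom r φ) k = j ↔ k ∈ restrictHom r φ j) := by
    intro φ hφ
    set ψ := restrictHom r φ with hψdef
    have hdisj : ∀ j j', j ≠ j' → Disjoint (ψ j) (ψ j') := by
      intro j j' hjj
      simp only [hψdef, restrictHom, Set.mem_setOf_eq, Set.disjoint_iUnion_left,
        Set.disjoint_iUnion_right]
      intro f hf g hg
      exact hφ.2.1 g f ⟨1, hone, fun h => hjj (by rw [← hg, ← hf, h])⟩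
    have hex : ∀ k, ∃ j, k ∈ ψ j := by
      intro k
      have hk : k ∈ (⋃ f, φ f) := by rw [hφ.2.2.1]; trivial
      obtain ⟨f, hf⟩ := Set.mem_iUnion.mp hk
      exact ⟨r (f 1), Set.mem_iUnion.mpr ⟨f, Set.mem_iUnion.mpr ⟨rfl, hf⟩⟩⟩
    have hch : ∀ k, k ∈ ψ (Ψ ψ k) := by
      intro k
      have : Ψ ψ k = (hex k).choose := by rw [hΨ]; simp only [dif_pos (hex k)]
      rw [this]
      exact (hex k).choose_spec
    intro k j
    constructor
    · intro h; rw [← h]; exact hch k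
    · intro h
      by_contra hne
      exact Set.disjoint_left.mp (hdisj _ _ hne) (hch k) h
  rw [homCount]
  push_cast
  apply Nat.cast_le.mpr
  apply Set.ncard_le_ncard_of_injOn Ψ ?_ ?_ (Set.toFinite _)
  · -- maps to
    rintro ψ ⟨φ, hφ, rfl⟩
    set Bl : Fin m → Set (Fin d) := fun i => ⋃ f ∈ {f : G → Fin m | f 1 = i}, φ f with hBl
    have hBldisj : ∀ i i' : Fin m, i ≠ i' → Disjoint (Bl i) (Bl i') := by
      intro i i' hii
      simp only [hBl, Set.mem_setOf_eq, Set.disjoint_iUnion_left, Set.disjoint_iUnion_right]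
      intro f hf g hg
      exact hφ.2.1 g f ⟨1, hone, fun h => hii (by rw [← hg, ← hf, h])⟩
    have hψeq : ∀ j, restrictHom r φ j = ⋃ i ∈ Finset.univ.filter (fun i => r i = j), Bl i := by
      intro j
      ext k
      simp only [restrictHom, hBl, Set.mem_setOf_eq, Set.mem_iUnion, Finset.mem_filter,
        Finset.mem_univ, true_and, exists_prop]
      constructor
      · rintro ⟨f, hf, hk⟩; exact ⟨f 1, hf, f, rfl, hk⟩
      · rintro ⟨i, hi, f, hf, hk⟩; exact ⟨f, by rw [hf]; exact hi, hk⟩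
    -- the fifth IsHom condition, restated
    have hΔ : ∑ i : Fin m, |unif (Bl i) - (μ (A i)).toReal| < δ := by
      have h5 := hφ.2.2.2.2
      have hcomp : ∀ f : {s // s ∈ ({1} : Finset G)} → Fin m,
          |unif (cellBlock φ {1} f) - (μ (cellF A ({1} : Finset G) f)).toReal|
            = |unif (Bl (f default)) - (μ (A (f default))).toReal| := by
        intro f
        have hd1 : ((default : {s // s ∈ ({1} : Finset G)}) : G) = 1 :=
          Finset.mem_singleton.mp (default : {s // s ∈ ({1} : Finset G)}).2
        have hcb : cellBlock φ {1} f = Bl (f default) := by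
          ext k
          simp only [cellBlock, hBl, Set.mem_setOf_eq, Set.mem_iUnion, exists_prop]
          constructor
          · rintro ⟨g, hg, hk⟩
            exact ⟨g, by have := hg default; rw [hd1] at this; exact this, hk⟩
          · rintro ⟨g, hg, hk⟩
            refine ⟨g, fun s => ?_, hk⟩
            rw [Unique.eq_default s, hd1]
            exact hg
        have hcf : cellF A ({1} : Finset G) f = A (f default) := by
          rw [cellF]
          apply subset_antisymm
          · refine le_trans (Set.iInter_subset _ default) (le_of_eq ?_)
            rw [hd1, one_smul]
          · apply Set.subset_iInter
            intro s
            rw [Unique.eq_default s, hd1, one_smul]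
        rw [hcb, hcf]
      calc ∑ i : Fin m, |unif (Bl i) - (μ (A i)).toReal|
          = ∑ f : {s // s ∈ ({1} : Finset G)} → Fin m,
              |unif (cellBlock φ {1} f) - (μ (cellF A ({1} : Finset G) f)).toReal| :=
            (Fintype.sum_equiv (Equiv.funUnique {s // s ∈ ({1} : Finset G)} (Fin m)) _ _
              (fun f => hcomp f)).symm
        _ < δ := h5
    -- measures of P j
    have hPj : ∀ j, (μ (P j)).toReal =
        ∑ i ∈ Finset.univ.filter (fun i => r i = j), (μ (A i)).toReal := by
      intro j
      have hPeq : P j = ⋃ i ∈ Finset.univ.filter (fun i => r i = j), A i := by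
        apply subset_antisymm
        · intro x hx
          have hx' : x ∈ ⋃ i, A i := by rw [hA.2.2]; trivial
          obtain ⟨i, hi⟩ := Set.mem_iUnion.mp hx'
          have hri : r i = j := by
            by_contra hne
            exact Set.disjoint_left.mp (hP.2.1 hne) (hr i hi) hx
          exact Set.mem_iUnion₂.mpr ⟨i, Finset.mem_filter.mpr ⟨Finset.mem_univ i, hri⟩, hi⟩
        · intro x hx
          obtain ⟨i, hi, hx⟩ := Set.mem_iUnion₂.mp hx
          rw [← (Finset.mem_filter.mp hi).2]
          exact hr i hx
      rw [hPeq, measure_biUnion_finset ?_ (fun i _ => hA.1 i),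
        ENNReal.toReal_sum (fun i _ => measure_ne_top μ _)]
      intro i _ i' _ hii
      exact hA.2.1 hii
    -- cardinalities
    have hcard : ∀ j, ((Finset.univ.filter (fun k => Ψ (restrictHom r φ) k = j)).card : ℝ) / d =
        ∑ i ∈ Finset.univ.filter (fun i => r i = j), unif (Bl i) := by
      intro j
      have h1 : restrictHom r φ j =
          ↑(Finset.univ.filter (fun k => Ψ (restrictHom r φ) k = j)) := by
        ext k
        simp only [Finset.coe_filter, Finset.mem_univ, true_and, Set.mem_setOf_eq]
        exact (hfib φ hφ k j).symm
      have h2 : (restrictHom r φ j).ncard =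
          ∑ i ∈ Finset.univ.filter (fun i => r i = j), (Bl i).ncard := by
        rw [hψeq j]
        exact ncard_biUnion _ _ (fun i _ i' _ h => hBldisj i i' h)
      have h3 : ((restrictHom r φ j).ncard : ℝ) =
          (Finset.univ.filter (fun k => Ψ (restrictHom r φ) k = j)).card := by
        rw [h1, Set.ncard_coe_finset]
      rw [← h3, h2]
      push_cast
      rw [Finset.sum_div]
      rfl
    -- conclude membership
    simp only [Set.mem_setOf_eq]
    calc ∑ j, |((Finset.univ.filter (fun k => Ψ (restrictHom r φ) k = j)).card : ℝ)/d
            - (μ (P j)).toReal|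
        = ∑ j, |∑ i ∈ Finset.univ.filter (fun i => r i = j),
            (unif (Bl i) - (μ (A i)).toReal)| := by
          refine Finset.sum_congr rfl fun j _ => ?_
          rw [hcard j, hPj j, Finset.sum_sub_distrib]
      _ ≤ ∑ j, ∑ i ∈ Finset.univ.filter (fun i => r i = j),
            |unif (Bl i) - (μ (A i)).toReal| :=
          Finset.sum_le_sum fun j _ => Finset.abs_sum_le_sum_abs _ _
      _ = ∑ i : Fin m, |unif (Bl i) - (μ (A i)).toReal| :=
          Finset.sum_fiberwise _ _ _
      _ ≤ δ := hΔ.le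
  · -- injectivity
    rintro ψ₁ ⟨φ₁, hφ₁, rfl⟩ ψ₂ ⟨φ₂, hφ₂, rfl⟩ heq
    funext j
    ext k
    rw [← hfib φ₁ hφ₁ k j, heq, hfib φ₂ hφ₂ k j]

end Main


set_option maxHeartbeats 1000000 in
theorem stmt11' {G : Type*} [Group G] [Countable G] [DecidableEq G]
    {X : Type*} [MeasurableSpace X] [MulAction G X]
    (μ : Measure X) [IsProbabilityMeasure μ]
    (hact : ∀ g : G, MeasurePreserving (fun x : X => g • x) μ μ)
    (dseq : ℕ → ℕ) (σ : ∀ i, G → Equiv.Perm (Fin (dseq i)))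
    (hσ : IsSoficApprox dseq σ)
    {n m : ℕ} (P : Fin n → Set X) (A : Fin m → Set X) (r : Fin m → Fin n)
    (hP : IsFinPartition P) (hA : IsFinPartition A) (hr : PartRefines A P r) :
    hPartLoc μ A r dseq σ ≤ shannonEnt μ P := by
  classical
  have hXne : Nonempty X := by
    by_contra h
    rw [not_nonempty_iff] at h
    have h1 : μ Set.univ = 1 := measure_univ
    rw [Set.univ_eq_empty_iff.mpr h, measure_empty] at h1
    exact zero_ne_one h1
  have hn : 0 < n := by
    obtain ⟨x⟩ := hXne
    have hx : x ∈ ⋃ j, P j := hP.2.2 ▸ Set.mem_univ x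
    obtain ⟨j, -⟩ := Set.mem_iUnion.mp hx
    exact lt_of_le_of_lt (Nat.zero_le _) j.2
  have hH0 : 0 ≤ shannonEnt μ P := shannonEnt_nonneg μ P
  have hsum1 : ∑ j, (μ (P j)).toReal = 1 := sum_toReal_measure_partition μ P hP
  have hμ0 : ∀ j, 0 ≤ (μ (P j)).toReal := fun j => ENNReal.toReal_nonneg
  have hμ1 : ∀ j, (μ (P j)).toReal ≤ 1 := fun j => by
    have := ENNReal.toReal_mono (by simp) (prob_le_one (μ := μ) (s := P j))
    simpa using this
  refine le_of_forall_pos_le_add ?_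
  intro ε hε
  have hexp1 : 1 < Real.exp (ε/2) := by
    rw [← Real.exp_zero]; exact Real.exp_lt_exp.mpr (by linarith)
  set η : ℝ := (Real.exp (ε/2) - 1) / (n+1) with hηdef
  have hη : 0 < η := div_pos (by linarith) (by positivity)
  have hn1 : (1:ℝ) ≤ n := by exact_mod_cast hn
  set T : ℝ := 1 + n*η with hTdef
  have hnη : η ≤ (n:ℝ)*η := by nlinarith
  have hT1 : 1 ≤ T := by nlinarith
  have hηT : η ≤ T := by nlinarith
  have hkey : η * (n+1) = Real.exp (ε/2) - 1 := by rw [hηdef]; field_simp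
  have hTexp : T ≤ Real.exp (ε/2) := by nlinarith
  have hlogT : Real.log T ≤ ε/2 := by
    calc Real.log T ≤ Real.log (Real.exp (ε/2)) :=
          Real.log_le_log (by linarith) hTexp
      _ = ε/2 := Real.log_exp _
  have hlogT0 : 0 ≤ Real.log T := Real.log_nonneg hT1
  set q : Fin n → ℝ := fun j => ((μ (P j)).toReal + η)/T with hqdef
  have hq0 : ∀ j, 0 < q j := fun j => div_pos (by linarith [hμ0 j]) (by linarith)
  have hq1' : ∀ j, q j ≤ 1 := fun j => by
    rw [hqdef, div_le_one (by linarith)]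
    have := hμ1 j; nlinarith
  have hqsum : ∑ j, q j = 1 := by
    rw [hqdef, ← Finset.sum_div, Finset.sum_add_distrib, hsum1, Finset.sum_const,
      Finset.card_univ, Fintype.card_fin, nsmul_eq_mul]
    exact div_self (by linarith)
  set Cq : ℝ := 1 + Real.log (T/η) with hCqdef
  have hTη1 : 1 ≤ T/η := (one_le_div hη).mpr hηT
  have hCq0 : 0 < Cq := by have := Real.log_nonneg hTη1; rw [hCqdef]; linarith
  have hlogq : ∀ j, |Real.log (q j)| ≤ Cq := by
    intro j
    rw [abs_of_nonpos (Real.log_nonpos (hq0 j).le (hq1' j)), ← Real.log_inv]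
    have h2 : (q j)⁻¹ ≤ T/η := by
      rw [hqdef, inv_div]
      gcongr
      all_goals linarith [hμ0 j]
    calc Real.log (q j)⁻¹ ≤ Real.log (T/η) :=
          Real.log_le_log (by positivity) h2
      _ ≤ Cq := by linarith
  set δ : ℝ := (ε/2)/Cq with hδdef
  have hδ : 0 < δ := div_pos (by linarith) hCq0
  have hδCq : δ * Cq = ε/2 := by rw [hδdef]; field_simp
  set B : ℝ := shannonEnt μ P + ε with hBdef
  have hB0 : 0 ≤ B := by linarith
  -- the per-index bound
  have key : ∀ i, Real.log (homCount μ A r {1} δ (σ i)) / (dseq i) ≤ B := by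
    intro i
    rcases Nat.eq_zero_or_pos (dseq i) with hd | hd
    · have hz : ((dseq i : ℕ) : ℝ) = 0 := by exact_mod_cast hd
      rw [hz, div_zero]; exact hB0
    · have hdR : (0:ℝ) < dseq i := by exact_mod_cast hd
      have h1 : (homCount μ A r {1} δ (σ i) : ℝ) ≤ Real.exp (dseq i * B) := by
        refine le_trans (homCount_le_card μ hn A P r hA hP hr δ (σ i)) ?_
        apply count_le_exp_set q hq0 hqsum
        intro c hc
        simp only [Set.mem_setOf_eq] at hc
        set p : Fin n → ℝ := fun j =>
          ((Finset.univ.filter (fun k => c k = j)).card : ℝ)/(dseq i) with hpdef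
        have hd0 : ((dseq i : ℕ) : ℝ) ≠ 0 := hdR.ne'
        have hsplit : ∑ k, Real.log (q (c k)) =
            (dseq i : ℝ) * ∑ j, p j * Real.log (q j) := by
          have h1 : ∑ k, Real.log (q (c k)) =
              ∑ j, ∑ k ∈ Finset.univ.filter (fun k => c k = j), Real.log (q (c k)) :=
            (Finset.sum_fiberwise Finset.univ c (fun k => Real.log (q (c k)))).symm
          rw [h1, Finset.mul_sum]
          refine Finset.sum_congr rfl fun j _ => ?_
          rw [Finset.sum_congr rfl (fun k hk => by rw [(Finset.mem_filter.mp hk).2]),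
            Finset.sum_const, nsmul_eq_mul]
          have h3 : p j = ((Finset.univ.filter (fun k => c k = j)).card : ℝ)/(dseq i) := rfl
          rw [h3]
          field_simp
        rw [hsplit]
        have hmain : -∑ j, p j * Real.log (q j) ≤ B := by
          have hLj : ∀ j, Real.log (q j) =
              Real.log ((μ (P j)).toReal + η) - Real.log T := fun j => by
            rw [hqdef]
            exact Real.log_div (ne_of_gt (by linarith [hμ0 j])) (ne_of_gt (by linarith))
          -- term 2
          have t2 : ∑ j, ((μ (P j)).toReal - p j) * Real.log (q j) ≤ ε/2 := by
            have e1 : ∀ j ∈ Finset.univ, ((μ (P j)).toReal - p j) * Real.log (q j) ≤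
                |p j - (μ (P j)).toReal| * Cq := by
              intro j _
              calc ((μ (P j)).toReal - p j) * Real.log (q j)
                  ≤ |((μ (P j)).toReal - p j) * Real.log (q j)| := le_abs_self _
                _ = |(μ (P j)).toReal - p j| * |Real.log (q j)| := abs_mul _ _
                _ ≤ |(μ (P j)).toReal - p j| * Cq :=
                    mul_le_mul_of_nonneg_left (hlogq j) (abs_nonneg _)
                _ = |p j - (μ (P j)).toReal| * Cq := by rw [abs_sub_comm]
            calc ∑ j, ((μ (P j)).toReal - p j) * Real.log (q j)
                ≤ ∑ j, |p j - (μ (P j)).toReal| * Cq := Finset.sum_le_sum e1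
              _ = (∑ j, |p j - (μ (P j)).toReal|) * Cq := (Finset.sum_mul _ _ _).symm
              _ ≤ δ * Cq := mul_le_mul_of_nonneg_right hc hCq0.le
              _ = ε/2 := hδCq
          -- term 1
          have t1 : -∑ j, (μ (P j)).toReal * Real.log (q j) ≤ shannonEnt μ P + ε/2 := by
            have e2 : ∀ j, (μ (P j)).toReal * Real.log (q j) =
                (μ (P j)).toReal * Real.log ((μ (P j)).toReal + η)
                  - (μ (P j)).toReal * Real.log T := fun j => by rw [hLj j]; ring
            have e3 : -∑ j, (μ (P j)).toReal * Real.log (q j) =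
                (-∑ j, (μ (P j)).toReal * Real.log ((μ (P j)).toReal + η)) + Real.log T := by
              simp only [e2]
              rw [Finset.sum_sub_distrib, ← Finset.sum_mul, hsum1, one_mul]
              ring
            have e4 : ∀ j ∈ Finset.univ,
                -((μ (P j)).toReal * Real.log ((μ (P j)).toReal + η)) ≤
                -((μ (P j)).toReal * Real.log ((μ (P j)).toReal)) := by
              intro j _
              rcases eq_or_lt_of_le (hμ0 j) with h0 | h0
              · rw [← h0]; simp
              · have hlog := Real.log_le_log h0
                  (by linarith : (μ (P j)).toReal ≤ (μ (P j)).toReal + η)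
                have := mul_le_mul_of_nonneg_left hlog (hμ0 j)
                linarith
            have e5 : -∑ j, (μ (P j)).toReal * Real.log ((μ (P j)).toReal + η) ≤
                shannonEnt μ P := by
              rw [shannonEnt, ← Finset.sum_neg_distrib, ← Finset.sum_neg_distrib]
              exact Finset.sum_le_sum e4
            linarith
          have e0 : ∑ j, ((μ (P j)).toReal - p j) * Real.log (q j) =
              ∑ j, (μ (P j)).toReal * Real.log (q j) - ∑ j, p j * Real.log (q j) := by
            simp only [sub_mul]; exact Finset.sum_sub_distrib _ _
          rw [hBdef]
          linarith
        calc -(↑(dseq i) * ∑ j, p j * Real.log (q j))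
            = ↑(dseq i) * (-∑ j, p j * Real.log (q j)) := by ring
          _ ≤ ↑(dseq i) * B := mul_le_mul_of_nonneg_left hmain hdR.le
      have h2 : Real.log (homCount μ A r {1} δ (σ i)) ≤ dseq i * B := by
        rcases Nat.eq_zero_or_pos (homCount μ A r {1} δ (σ i)) with h0 | h0
        · rw [h0]; simp; positivity
        · have hpos : (0:ℝ) < homCount μ A r {1} δ (σ i) := by exact_mod_cast h0
          exact (Real.log_le_iff_le_exp hpos).mpr h1
      rw [div_le_iff₀ hdR]
      linarith
  have hmem : hFδ μ A r {1} δ dseq σ ∈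
      {x | ∃ (F : Finset G) (δ' : ℝ), (1:G) ∈ F ∧ 0 < δ' ∧ x = hFδ μ A r F δ' dseq σ} :=
    ⟨{1}, δ, Finset.mem_singleton_self 1, hδ, rfl⟩
  have hbdd : BddBelow
      {x | ∃ (F : Finset G) (δ' : ℝ), (1:G) ∈ F ∧ 0 < δ' ∧ x = hFδ μ A r F δ' dseq σ} := by
    refine ⟨0, ?_⟩
    rintro x ⟨F, δ', -, -, rfl⟩
    exact limsup_div_nonneg (fun i => homCount μ A r F δ' (σ i)) dseq
  calc hPartLoc μ A r dseq σ ≤ hFδ μ A r {1} δ dseq σ := csInf_le hbdd hmem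
    _ ≤ B := limsup_le_of_le_forall
        (fun i => div_nonneg (Real.log_natCast_nonneg _) (Nat.cast_nonneg _)) key
    _ = shannonEnt μ P + ε := rfl


/-- Lemma 4.1(i).  Let `(X,B,μ)` be a probability space with a
measure-preserving action of a countable sofic group `G`, and `Σ` a sofic approximation
sequence.  For finite measurable partitions `α ≥ ξ` of `X` (refinement witnessed by
`r`), the sofic entropy `h_{Σ,μ}^ξ(α)` is at most the Shannon entropy `H_μ(ξ)`. -/
theorem stmt11 {G : Type*} [Group G] [Countable G] [DecidableEq G]
    {X : Type*} [MeasurableSpace X] [MulAction G X]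
    (μ : Measure X) [IsProbabilityMeasure μ]
    (hact : ∀ g : G, MeasurePreserving (fun x : X => g • x) μ μ)
    (dseq : ℕ → ℕ) (σ : ∀ i, G → Equiv.Perm (Fin (dseq i)))
    (hσ : IsSoficApprox dseq σ)
    {n m : ℕ} (P : Fin n → Set X) (A : Fin m → Set X) (r : Fin m → Fin n)
    (hP : IsFinPartition P) (hA : IsFinPartition A) (hr : PartRefines A P r) :
    hPartLoc μ A r dseq σ ≤ shannonEnt μ P := by
  exact stmt11' μ hact dseq σ hσ P A r hP hA hr
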